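/- arXiv:1409.6646 — 6 statements merged into one kernel-verified Lean document; each statement's English description precedes it below -/
import Mathlib

section
/- The Laplace transform of S[p] satisfies L[S[p]](s) = (1/s) ∫_0^s L[p](s') ds' for all s > 0. -/
open MeasureTheory Real Set

/-- S[p](x) = ∫_x^∞ p(u)/u du. -/
noncomputable def S (p : ℝ → ℝ) (x : ℝ) : ℝ := ∫ u in Set.Ioi x, p u / u

/-- T[p] = S[p] * S[p] (convolution on [0,∞)). -/
noncomputable def T (p : ℝ → ℝ) (x : ℝ) : ℝ := ∫ v in (0:ℝ)..x, S p (x - v) * S p v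

/-- Laplace transform of a density on [0,∞). -/
noncomputable def L (p : ℝ → ℝ) (s : ℝ) : ℝ := ∫ x in Set.Ioi (0:ℝ), Real.exp (-s * x) * p x

lemma exp_int (s : ℝ) (hs : s ≠ 0) (a b : ℝ) :
    ∫ x in a..b, Real.exp (-(s*x)) = (Real.exp (-(s*a)) - Real.exp (-(s*b)))/s := by
  have h : ∀ x ∈ Set.uIcc a b, HasDerivAt (fun x => -Real.exp (-(s*x))/s) (Real.exp (-(s*x))) x := by
    intro x _
    have h1 : HasDerivAt (fun x : ℝ => -(s*x)) (-s) x := by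
      have h0 := ((hasDerivAt_id x).const_mul s).neg; simp only [id, mul_one] at h0; exact h0
    have h3 := (h1.exp.neg).div_const s
    refine h3.congr_deriv ?_
    rw [div_eq_iff hs]; ring
  rw [intervalIntegral.integral_eq_sub_of_hasDerivAt h
    (by apply Continuous.intervalIntegrable; continuity)]
  ring

/-- The Laplace transform of S[p] satisfies L[S[p]](s) = (1/s)∫_0^s L[p](s')ds'. -/
theorem laplace_S (p : ℝ → ℝ) (hpm : Measurable p) (hpnn : ∀ x, 0 ≤ p x)
    (hpint : IntegrableOn p (Set.Ioi 0)) (hp1 : ∫ x in Set.Ioi (0:ℝ), p x = 1)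
    (hfub : IntegrableOn (fun u => p u / u) (Set.Ioi 0)) :
    ∀ s : ℝ, 0 < s → L (S p) s = (1 / s) * ∫ t in (0:ℝ)..s, L p t := by
  intro s hs
  have hs' : s ≠ 0 := ne_of_gt hs
  -- Claim A
  have claimA : (∫ t in (0:ℝ)..s, L p t)
      = ∫ u in Set.Ioi (0:ℝ), p u * ((1 - Real.exp (-(s*u)))/u) := by
    have hint : Integrable (Function.uncurry fun t u => Real.exp (-t * u) * p u)
        ((volume.restrict (Set.Ioc 0 s)).prod (volume.restrict (Set.Ioi 0))) := by
      have hb : Integrable (fun z : ℝ × ℝ => (1:ℝ) * p z.2)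
          ((volume.restrict (Set.Ioc 0 s)).prod (volume.restrict (Set.Ioi 0))) :=
        Integrable.mul_prod (integrable_const 1) hpint
      have hae : ∀ᵐ z : ℝ×ℝ ∂((volume.restrict (Set.Ioc 0 s)).prod (volume.restrict (Set.Ioi 0))),
          z ∈ (Set.Ioc (0:ℝ) s) ×ˢ (Set.Ioi (0:ℝ)) := by
        rw [Measure.prod_restrict]
        exact ae_restrict_mem (measurableSet_Ioc.prod measurableSet_Ioi)
      refine hb.mono' ?_ (hae.mono fun z hz => ?_)
      · exact (((measurable_fst.neg.mul measurable_snd).exp).mul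
          (hpm.comp measurable_snd)).aestronglyMeasurable
      · have h1 : Real.exp (-z.1 * z.2) ≤ 1 := by
          rw [Real.exp_le_one_iff]
          have hz2 : (0:ℝ) < z.2 := hz.2
          have := hz.1.1.le; have := hz2.le
          nlinarith [hz.1.1.le, le_of_lt hz2]
        have h2 : 0 ≤ p z.2 := hpnn _
        simp only [Function.uncurry, norm_mul, Real.norm_eq_abs, abs_of_nonneg (Real.exp_pos _).le,
          abs_of_nonneg h2, one_mul]
        nlinarith [Real.exp_pos (-z.1 * z.2)]
    calc ∫ t in (0:ℝ)..s, L p t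
        = ∫ t in Set.Ioc (0:ℝ) s, ∫ u in Set.Ioi (0:ℝ), Real.exp (-t * u) * p u := by
          rw [intervalIntegral.integral_of_le hs.le]; rfl
      _ = ∫ u in Set.Ioi (0:ℝ), ∫ t in Set.Ioc (0:ℝ) s, Real.exp (-t * u) * p u :=
          integral_integral_swap hint
      _ = ∫ u in Set.Ioi (0:ℝ), p u * ((1 - Real.exp (-(s*u)))/u) := by
          refine setIntegral_congr_fun measurableSet_Ioi (fun u hu => ?_)
          have hu0 : (0:ℝ) < u := hu
          rw [show (fun t => Real.exp (-t*u) * p u) = fun t => Real.exp (-(u*t)) * p u by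
            funext t; rw [show -t*u = -(u*t) by ring]]
          rw [integral_mul_const, ← intervalIntegral.integral_of_le hs.le,
            exp_int u hu0.ne' 0 s, mul_zero, neg_zero, Real.exp_zero, mul_comm u s]
          ring
  -- Claim B
  have claimB : L (S p) s
      = ∫ u in Set.Ioi (0:ℝ), ((1 - Real.exp (-(s*u)))/s) * (p u / u) := by
    have hint : Integrable
        (Function.uncurry fun x u => if x < u then Real.exp (-(s*x)) * (p u / u) else 0)
        ((volume.restrict (Set.Ioi (0:ℝ))).prod (volume.restrict (Set.Ioi (0:ℝ)))) := by
      have hb : Integrable (fun z : ℝ × ℝ => Real.exp (-(s*z.1)) * (p z.2 / z.2))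
          ((volume.restrict (Set.Ioi (0:ℝ))).prod (volume.restrict (Set.Ioi (0:ℝ)))) := by
        have h1 : IntegrableOn (fun x : ℝ => Real.exp (-(s*x))) (Set.Ioi (0:ℝ)) := by
          simpa [neg_mul] using exp_neg_integrableOn_Ioi (0:ℝ) hs
        exact Integrable.mul_prod h1 hfub
      have hae : ∀ᵐ z : ℝ×ℝ ∂((volume.restrict (Set.Ioi (0:ℝ))).prod (volume.restrict (Set.Ioi (0:ℝ)))),
          z ∈ (Set.Ioi (0:ℝ)) ×ˢ (Set.Ioi (0:ℝ)) := by
        rw [Measure.prod_restrict]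
        exact ae_restrict_mem (measurableSet_Ioi.prod measurableSet_Ioi)
      refine hb.mono' ?_ (hae.mono fun z hz => ?_)
      · refine Measurable.aestronglyMeasurable (Measurable.ite
          (measurableSet_lt measurable_fst measurable_snd) ?_ measurable_const)
        exact ((measurable_fst.const_mul s).neg.exp).mul
          ((hpm.comp measurable_snd).div measurable_snd)
      · have h2 : 0 ≤ p z.2 / z.2 := div_nonneg (hpnn _) (show (0:ℝ) < z.2 from hz.2).le
        simp only [Function.uncurry]
        split
        · rw [Real.norm_eq_abs, abs_of_nonneg (mul_nonneg (Real.exp_pos _).le h2)]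
        · simpa using mul_nonneg (Real.exp_pos (-(s*z.1))).le h2
    calc L (S p) s
        = ∫ x in Set.Ioi (0:ℝ), ∫ u in Set.Ioi (0:ℝ),
            (if x < u then Real.exp (-(s*x)) * (p u / u) else 0) := by
          refine setIntegral_congr_fun measurableSet_Ioi (fun x hx => ?_)
          have hx0 : (0:ℝ) < x := hx
          have h1 : (fun u => if x < u then Real.exp (-(s*x)) * (p u/u) else 0)
              = (Set.Ioi x).indicator (fun u => Real.exp (-(s*x)) * (p u/u)) := by
            funext u; simp [Set.indicator_apply]
          rw [h1, setIntegral_indicator measurableSet_Ioi, Set.Ioi_inter_Ioi,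
            max_eq_right hx0.le, integral_const_mul]
          rw [show -s*x = -(s*x) by ring]
          rfl
      _ = ∫ u in Set.Ioi (0:ℝ), ∫ x in Set.Ioi (0:ℝ),
            (if x < u then Real.exp (-(s*x)) * (p u / u) else 0) :=
          integral_integral_swap hint
      _ = ∫ u in Set.Ioi (0:ℝ), ((1 - Real.exp (-(s*u)))/s) * (p u / u) := by
          refine setIntegral_congr_fun measurableSet_Ioi (fun u hu => ?_)
          have hu0 : (0:ℝ) < u := hu
          have h1 : (fun x => if x < u then Real.exp (-(s*x)) * (p u/u) else 0)
              = (Set.Iio u).indicator (fun x => Real.exp (-(s*x)) * (p u/u)) := by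
            funext x; simp [Set.indicator_apply]
          rw [h1, setIntegral_indicator measurableSet_Iio, Set.Ioi_inter_Iio,
            integral_mul_const, ← integral_Ioc_eq_integral_Ioo,
            ← intervalIntegral.integral_of_le hu0.le, exp_int s hs' 0 u,
            mul_zero, neg_zero, Real.exp_zero]
  rw [claimB, claimA, ← integral_const_mul]
  refine setIntegral_congr_fun measurableSet_Ioi (fun u hu => ?_)
  have hu0 : (0:ℝ) < u := hu
  field_simp
end

section
/- The Gamma density p_w(x) = (4/w²) x e^{-2x/w} is a fixed point of the operator T[p] = S[p] * S[p] (convolution), i.e. T[p_w] = p_w for every w > 0. -/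
open MeasureTheory Real Set

lemma integral_exp_neg_mul_Ioi' {b : ℝ} (hb : 0 < b) (x : ℝ) :
    (∫ u in Set.Ioi x, Real.exp (-(b * u))) = Real.exp (-(b * x)) / b := by
  have h := integral_comp_mul_left_Ioi (fun t => Real.exp (-t)) x hb
  simp only [integral_exp_neg_Ioi, smul_eq_mul] at h
  rw [h]
  field_simp

lemma S_eval (w : ℝ) (hw : 0 < w) (x : ℝ) (hx : 0 ≤ x) :
    S (fun u => (4 / w ^ 2) * u * Real.exp (-2 * u / w)) x
      = (2 / w) * Real.exp (-2 * x / w) := by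
  have hb : 0 < 2 / w := by positivity
  have h1 : S (fun u => (4 / w ^ 2) * u * Real.exp (-2 * u / w)) x
      = ∫ u in Set.Ioi x, (4 / w ^ 2) * Real.exp (-(2 / w * u)) := by
    unfold S
    refine setIntegral_congr_fun measurableSet_Ioi (fun u hu => ?_)
    have hu0 : u ≠ 0 := by
      have : 0 < u := lt_of_le_of_lt hx hu
      exact this.ne'
    field_simp
  rw [h1, MeasureTheory.integral_const_mul, integral_exp_neg_mul_Ioi' hb x]
  rw [show -(2 / w * x) = -2 * x / w by ring]
  field_simp
  ring

/-- The Gamma density with shape 2 and mean w is a fixed point of T. -/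
theorem gamma_fixed_point (w : ℝ) (hw : 0 < w) :
    ∀ x : ℝ, 0 ≤ x →
      T (fun u => (4 / w ^ 2) * u * Real.exp (-2 * u / w)) x
        = (4 / w ^ 2) * x * Real.exp (-2 * x / w) := by
  intro x hx
  unfold T
  have hcong : ∀ v ∈ Set.uIcc (0:ℝ) x,
      S (fun u => (4 / w ^ 2) * u * Real.exp (-2 * u / w)) (x - v)
        * S (fun u => (4 / w ^ 2) * u * Real.exp (-2 * u / w)) v
      = (4 / w ^ 2) * Real.exp (-2 * x / w) := by
    intro v hv
    rw [Set.uIcc_of_le hx] at hv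
    obtain ⟨hv0, hvx⟩ := hv
    rw [S_eval w hw (x - v) (by linarith), S_eval w hw v hv0,
      show 2 / w * Real.exp (-2 * (x - v) / w) * (2 / w * Real.exp (-2 * v / w))
        = 4 / w ^ 2 * (Real.exp (-2 * (x - v) / w) * Real.exp (-2 * v / w)) by ring,
      ← Real.exp_add, show -2 * (x - v) / w + -2 * v / w = -2 * x / w by ring]
  rw [intervalIntegral.integral_congr hcong, intervalIntegral.integral_const,
    smul_eq_mul]
  ring
end

section
/- If p is a probability density on [0,∞) whose Laplace transform p̂ satisfies p̂(s) = ((1/s)∫_0^s p̂(s')ds')² for all s > 0, then p̂(s) = 1/(1+Cs)² for some constant C ≥ 0. -/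
open MeasureTheory Real Set

/-- Solutions of the Laplace-transformed fixed point equation are (1+Cs)^{-2}. -/
theorem laplace_fixed_point_solution (p : ℝ → ℝ) (hpm : Measurable p)
    (hpnn : ∀ x, 0 ≤ p x) (hpint : IntegrableOn p (Set.Ioi 0))
    (hp1 : ∫ x in Set.Ioi (0:ℝ), p x = 1)
    (heq : ∀ s : ℝ, 0 < s → L p s = ((1 / s) * ∫ t in (0:ℝ)..s, L p t) ^ 2) :
    ∃ C : ℝ, 0 ≤ C ∧ ∀ s : ℝ, 0 ≤ s → L p s = 1 / (1 + C * s) ^ 2 := by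
  -- Integrability of the Laplace integrand for `s ≥ 0`.
  have hint : ∀ s : ℝ, 0 ≤ s → IntegrableOn (fun x => Real.exp (-s*x) * p x) (Set.Ioi 0) := by
    intro s hs
    apply hpint.mono'
    · exact ((Real.measurable_exp.comp (measurable_id.const_mul (-s))).mul hpm).aestronglyMeasurable
    · rw [ae_restrict_iff' measurableSet_Ioi]
      filter_upwards with x hx
      rw [Real.norm_eq_abs, abs_of_nonneg (mul_nonneg (Real.exp_pos _).le (hpnn x))]
      have : Real.exp (-s*x) ≤ 1 := by
        rw [Real.exp_le_one_iff]; nlinarith [(Set.mem_Ioi.mp hx).le]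
      exact mul_le_of_le_one_left (hpnn x) this
  -- Basic bounds on `L p`.
  have hφnn : ∀ s : ℝ, 0 ≤ s → 0 ≤ L p s := by
    intro s hs
    exact setIntegral_nonneg measurableSet_Ioi (fun x hx => mul_nonneg (Real.exp_pos _).le (hpnn x))
  have hφle : ∀ s : ℝ, 0 ≤ s → L p s ≤ 1 := by
    intro s hs
    rw [← hp1]
    apply setIntegral_mono_on (hint s hs) hpint measurableSet_Ioi
    intro x hx
    have : Real.exp (-s*x) ≤ 1 := by rw [Real.exp_le_one_iff]; nlinarith [le_of_lt (Set.mem_Ioi.mp hx)]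
    exact mul_le_of_le_one_left (hpnn x) this
  have hφ0 : L p 0 = 1 := by
    unfold L
    simpa using hp1
  -- Strict positivity of `L p`.
  have hφpos : ∀ s : ℝ, 0 ≤ s → 0 < L p s := by
    intro s hs
    rcases (hφnn s hs).lt_or_eq with h | h
    · exact h
    · exfalso
      have h0 : (fun x => Real.exp (-s*x) * p x) =ᵐ[volume.restrict (Set.Ioi 0)] 0 := by
        refine (integral_eq_zero_iff_of_nonneg ?_ (hint s hs)).mp h.symm
        exact fun x => mul_nonneg (Real.exp_pos _).le (hpnn x)
      have hp0 : p =ᵐ[volume.restrict (Set.Ioi 0)] 0 := by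
        filter_upwards [h0] with x hx
        simpa [Real.exp_ne_zero] using mul_eq_zero.mp hx
      have : (∫ x in Set.Ioi (0:ℝ), p x) = 0 := by
        rw [integral_congr_ae hp0]; simp
      rw [hp1] at this; norm_num at this
  -- Continuity of `L p` on `(0, ∞)` by dominated convergence.
  have hφcont : ∀ s : ℝ, 0 < s → ContinuousAt (L p) s := by
    intro s hs
    apply continuousAt_of_dominated (bound := p) ?_ ?_ hpint ?_
    · filter_upwards with t
      exact ((Real.measurable_exp.comp (measurable_id.const_mul (-t))).mul hpm).aestronglyMeasurable
    · filter_upwards [eventually_gt_nhds hs] with t ht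
      rw [ae_restrict_iff' measurableSet_Ioi]
      filter_upwards with x hx
      rw [Real.norm_eq_abs, abs_of_nonneg (mul_nonneg (Real.exp_pos _).le (hpnn x))]
      have : Real.exp (-t*x) ≤ 1 := by
        rw [Real.exp_le_one_iff]; nlinarith [(Set.mem_Ioi.mp hx).le, ht.le]
      exact mul_le_of_le_one_left (hpnn x) this
    · filter_upwards with x
      exact ((Real.continuous_exp.comp (continuous_id.neg.mul continuous_const)).mul
        continuous_const).continuousAt
  -- The antiderivative `F` of `L p`.
  set F : ℝ → ℝ := fun s => ∫ t in (0:ℝ)..s, L p t with hFdef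
  have hFint : ∀ s : ℝ, 0 < s → IntervalIntegrable (L p) volume 0 s := by
    intro s hs
    rw [intervalIntegrable_iff_integrableOn_Ioc_of_le hs.le]
    refine Integrable.mono' (integrable_const 1) ?_ ?_
    · have hco : ContinuousOn (L p) (Set.Ioc 0 s) := fun x hx => (hφcont x hx.1).continuousWithinAt
      exact hco.aestronglyMeasurable measurableSet_Ioc
    · rw [ae_restrict_iff' measurableSet_Ioc]
      filter_upwards with x hx
      rw [Real.norm_eq_abs, abs_of_nonneg (hφnn x hx.1.le)]
      exact hφle x hx.1.le
  have hFderiv : ∀ s : ℝ, 0 < s → HasDerivAt F (L p s) s := by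
    intro s hs
    exact intervalIntegral.integral_hasDerivAt_right (hFint s hs)
      (ContinuousOn.stronglyMeasurableAtFilter isOpen_Ioi
        (fun x hx => (hφcont x hx).continuousWithinAt) s hs)
      (hφcont s hs)
  have hFpos : ∀ s : ℝ, 0 < s → 0 < F s := by
    intro s hs
    rcases (intervalIntegral.integral_nonneg hs.le (fun t ht => hφnn t ht.1)).lt_or_eq with h | h
    · exact h
    · exfalso
      have := heq s hs
      rw [← h] at this
      simp at this
      exact absurd this (hφpos s hs.le).ne'
  -- The function `s ↦ 1/s - 1/F s` has zero derivative on `(0, ∞)`.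
  have hHderiv : ∀ x : ℝ, 0 < x → HasDerivAt (fun s => 1/s - 1/(F s)) 0 x := by
    intro x hx
    have h1 : HasDerivAt (fun s : ℝ => 1/s) (-(x^2)⁻¹) x := by
      simpa [one_div] using hasDerivAt_inv hx.ne'
    have h2 : HasDerivAt (fun s => 1/(F s)) (-(L p x)/(F x)^2) x := by
      simpa [one_div, Pi.inv_def] using (hFderiv x hx).inv (hFpos x hx).ne'
    have h3 : HasDerivAt (fun s => 1/s - 1/(F s)) (-(x^2)⁻¹ - -(L p x)/(F x)^2) x := h1.sub h2
    convert h3 using 1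
    have hφx := heq x hx
    have hF := (hFpos x hx).ne'
    have hFx : (∫ t in (0:ℝ)..x, L p t) = F x := rfl
    rw [hφx, hFx]
    field_simp
    ring
  -- Hence it is constant on `(0, ∞)`.
  have hconst : ∀ s : ℝ, 0 < s → 1/s - 1/(F s) = 1 - 1/(F 1) := by
    have key : ∀ a b : ℝ, 0 < a → a ≤ b → 1/a - 1/(F a) = 1/b - 1/(F b) := by
      intro a b ha hab
      have := intervalIntegral.integral_eq_sub_of_hasDerivAt
        (f := fun s => 1/s - 1/(F s)) (f' := fun _ => (0:ℝ))
        (fun x hx => hHderiv x (lt_of_lt_of_le ha (Set.uIcc_of_le hab ▸ hx : x ∈ Set.Icc a b).1))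
        (intervalIntegrable_const)
      simp only [intervalIntegral.integral_zero] at this
      have h0 : b⁻¹ - (F b)⁻¹ - (a⁻¹ - (F a)⁻¹) = 0 := by simpa using this.symm
      simp only [one_div]
      linarith
    intro s hs
    rcases le_total s 1 with h | h
    · simpa using key s 1 hs h
    · simpa using (key 1 s one_pos h).symm
  obtain ⟨K, hKdef⟩ : ∃ K : ℝ, K = 1 - 1/(F 1) := ⟨_, rfl⟩
  rw [← hKdef] at hconst
  have hK : ∀ s : ℝ, 0 < s → 1/(F s) = 1/s - K := by
    intro s hs
    have := hconst s hs
    linarith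
  -- `K ≤ 0`.
  have hKnonpos : K ≤ 0 := by
    by_contra h
    push_neg at h
    have hs : (0:ℝ) < 2/K := by positivity
    have h1 := hK (2/K) hs
    have h2 : (0:ℝ) < 1/(F (2/K)) := one_div_pos.mpr (hFpos _ hs)
    rw [h1] at h2
    have : 1/(2/K) = K/2 := by field_simp
    rw [this] at h2
    linarith
  refine ⟨-K, by linarith, ?_⟩
  intro s hs
  rcases hs.lt_or_eq with h | h
  · have hFs := hFpos s h
    have h1Fs := hK s h
    have hden : 1 + (-K) * s = s * (1/(F s)) := by
      rw [h1Fs]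
      field_simp
      ring
    rw [heq s h, hden]
    field_simp
    rfl
  · rw [← h]
    simpa using hφ0
end

section
/- If g is a continuous function on [0,∞) with g(0)=1 satisfying g(s) = (1/s)∫_0^s g(s')² ds' for all s > 0, and g is the square root of a Laplace transform of a probability density (hence 0 ≤ g ≤ 1), then g(s) = 1/(1+Cs) for some constant C ≥ 0. -/
open Real Set

/-- Solutions of g(s) = (1/s)∫_0^s g², with g continuous, g(0)=1, 0 ≤ g ≤ 1,
are g(s) = 1/(1+Cs). -/
theorem sqrt_laplace_solution (g : ℝ → ℝ)
    (hg : ContinuousOn g (Set.Ici 0)) (hg0 : g 0 = 1)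
    (hbd : ∀ s, 0 ≤ s → 0 ≤ g s ∧ g s ≤ 1)
    (heq : ∀ s : ℝ, 0 < s → s * g s = ∫ t in (0:ℝ)..s, (g t) ^ 2) :
    ∃ C : ℝ, 0 ≤ C ∧ ∀ s, 0 ≤ s → g s = 1 / (1 + C * s) := by
  set G : ℝ → ℝ := fun s => ∫ t in (0:ℝ)..s, (g t) ^ 2 with hGdef
  have hgsq : ContinuousOn (fun t => (g t) ^ 2) (Set.Ici 0) := hg.pow 2
  have hInt : ∀ a b : ℝ, 0 ≤ a → 0 ≤ b →
      IntervalIntegrable (fun t => (g t) ^ 2) MeasureTheory.volume a b := by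
    intro a b ha hb
    apply (hgsq.mono ?_).intervalIntegrable
    intro x hx
    exact le_trans (le_min ha hb) hx.1
  -- derivative of G on (0, ∞)
  have hGderiv : ∀ s : ℝ, 0 < s → HasDerivAt G ((g s) ^ 2) s := by
    intro s hs
    have hmem : Set.Ioi (0:ℝ) ∈ nhds s := isOpen_Ioi.mem_nhds hs
    have hca : ContinuousAt (fun t => (g t) ^ 2) s :=
      hgsq.continuousAt (Filter.mem_of_superset hmem Ioi_subset_Ici_self)
    exact intervalIntegral.integral_hasDerivAt_right (hInt 0 s le_rfl hs.le)
      ((hgsq.mono Ioi_subset_Ici_self).stronglyMeasurableAtFilter isOpen_Ioi s hs) hca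
  -- positivity of G
  have hδ : ∃ δ > 0, ∀ t, 0 ≤ t → t < δ → 1/2 < g t := by
    have := hg 0 (self_mem_Ici) -- ContinuousWithinAt
    have h := Metric.tendsto_nhdsWithin_nhds.mp this (1/2) (by norm_num)
    obtain ⟨δ, hδpos, hδ⟩ := h
    refine ⟨δ, hδpos, fun t ht htδ => ?_⟩
    have := hδ ht (by simpa [Real.dist_eq, abs_of_nonneg ht] using htδ)
    rw [hg0, Real.dist_eq] at this
    have := abs_lt.mp this
    linarith [this.1]
  have hGpos : ∀ s : ℝ, 0 < s → 0 < G s := by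
    intro s hs
    obtain ⟨δ, hδpos, hδ⟩ := hδ
    set m := min s (δ/2) with hm
    have hm0 : 0 < m := lt_min hs (by linarith)
    have hms : m ≤ s := min_le_left _ _
    have h1 : (1/2 : ℝ)^2 * m ≤ ∫ t in (0:ℝ)..m, (g t) ^ 2 := by
      calc (1/2 : ℝ)^2 * m = ∫ _ in (0:ℝ)..m, ((1/2:ℝ)^2) := by
            rw [intervalIntegral.integral_const, smul_eq_mul]; ring
        _ ≤ ∫ t in (0:ℝ)..m, (g t) ^ 2 := by
            apply intervalIntegral.integral_mono_on hm0.le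
              (intervalIntegrable_const) (hInt 0 m le_rfl hm0.le)
            intro x hx
            have hx0 : 0 ≤ x := hx.1
            have hxδ : x < δ := lt_of_le_of_lt hx.2 (by
              have : m ≤ δ/2 := min_le_right _ _; linarith)
            have := hδ x hx0 hxδ
            nlinarith
    have h2 : (0:ℝ) ≤ ∫ t in m..s, (g t) ^ 2 := by
      apply intervalIntegral.integral_nonneg hms
      intro x _; positivity
    have hsplit : G s = (∫ t in (0:ℝ)..m, (g t) ^ 2) + ∫ t in m..s, (g t) ^ 2 := by
      rw [hGdef]
      exact (intervalIntegral.integral_add_adjacent_intervals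
        (hInt 0 m le_rfl hm0.le) (hInt m s hm0.le hs.le)).symm
    nlinarith
  have hgpos : ∀ s : ℝ, 0 < s → 0 < g s := by
    intro s hs
    have h := heq s hs
    have h2 : 0 < s * g s := by rw [h]; exact hGpos s hs
    nlinarith
  have hGeq : ∀ s : ℝ, 0 < s → G s = s * g s := fun s hs => (heq s hs).symm
  -- the function F = 1/G - 1/s has derivative 0 on Ioi 0
  set F : ℝ → ℝ := fun s => (G s)⁻¹ - s⁻¹ with hF
  have hFderiv : ∀ s : ℝ, 0 < s → HasDerivAt F 0 s := by
    intro s hs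
    have h1 : HasDerivAt (fun s => (G s)⁻¹) (-((g s)^2) / (G s)^2) s :=
      (hGderiv s hs).inv (ne_of_gt (hGpos s hs))
    have h2 : HasDerivAt (fun s : ℝ => s⁻¹) (-(1:ℝ) / s^2) s := by
      exact (hasDerivAt_inv (ne_of_gt hs)).congr_deriv (by ring)
    have h3 := h1.sub h2
    refine HasDerivAt.congr_deriv h3 ?_
    rw [hGeq s hs]
    have hgs := (hgpos s hs).ne'
    have hss := hs.ne'
    field_simp
    ring
  -- F is constant on Ioi 0
  have hFconst : ∀ s : ℝ, 0 < s → F s = F 1 := by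
    intro s hs
    have hconv : Convex ℝ (Set.Ioi (0:ℝ)) := convex_Ioi 0
    have hdiff : DifferentiableOn ℝ F (Set.Ioi 0) :=
      fun x hx => ((hFderiv x hx).differentiableAt).differentiableWithinAt
    refine hconv.is_const_of_fderivWithin_eq_zero hdiff ?_ hs (by norm_num)
    intro x hx
    have := ((hFderiv x hx).hasFDerivAt.hasFDerivWithinAt).fderivWithin
      (isOpen_Ioi.uniqueDiffWithinAt hx)
    rw [this]
    ext
    simp
  set C : ℝ := F 1 with hC
  have hCval : C = 1 / g 1 - 1 := by
    rw [hC, hF]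
    simp only
    rw [hGeq 1 one_pos]
    norm_num
  have hg1pos : 0 < g 1 := hgpos 1 one_pos
  have hg1le : g 1 ≤ 1 := (hbd 1 zero_le_one).2
  have hCnn : 0 ≤ C := by
    rw [hCval]
    have : 1 ≤ 1 / g 1 := by
      rw [le_div_iff₀ hg1pos]; linarith
    linarith
  refine ⟨C, hCnn, fun s hs => ?_⟩
  rcases eq_or_lt_of_le hs with h | h
  · rw [← h]; simp [hg0]
  · have hFs := hFconst s h
    rw [hF] at hFs
    simp only at hFs
    rw [hGeq s h] at hFs
    have hgs := hgpos s h
    have hne : s * g s ≠ 0 := by positivity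
    have h1Cs : 1 + C * s = 1 / g s := by
      have : (s * g s)⁻¹ = s⁻¹ + C := by linarith [hFs]
      field_simp at this ⊢
      nlinarith [this]
    rw [h1Cs]
    field_simp
end

section
/- The operator T preserves the mean: if p is a probability density on [0,∞) with ∫_0^∞ x p(x) dx = w < ∞, then ∫_0^∞ x T[p](x) dx = w. -/
open intervalIntegral in
lemma integral_id' (a b : ℝ) : ∫ x in a..b, x = (b ^ 2 - a ^ 2) / 2 :=
  integral_id

open MeasureTheory Real Set

section Aux

variable {p : ℝ → ℝ}

lemma q_meas (hpm : Measurable p) : Measurable fun u => p u / u :=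
  hpm.div measurable_id

lemma S_meas (hpm : Measurable p) : Measurable (S p) := by
  have hF : StronglyMeasurable (Function.uncurry fun x u => if x < u then p u / u else 0) := by
    refine (Measurable.ite ?_ ((q_meas hpm).comp measurable_snd) measurable_const).stronglyMeasurable
    exact measurableSet_lt measurable_fst measurable_snd
  have h2 := hF.integral_prod_right (ν := (volume : Measure ℝ))
  have heq : S p = fun x => ∫ u, (fun x u => if x < u then p u / u else 0) x u := by
    funext x
    rw [S, ← integral_indicator measurableSet_Ioi]
    refine integral_congr_ae (Filter.Eventually.of_forall fun u => ?_)
    simp [Set.indicator_apply, Set.mem_Ioi]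
  rw [heq]
  exact h2.measurable

lemma S_nonneg (hpnn : ∀ x, 0 ≤ p x) {x : ℝ} (hx : 0 ≤ x) : 0 ≤ S p x := by
  refine setIntegral_nonneg measurableSet_Ioi fun u hu => ?_
  have h : 0 < u := lt_of_le_of_lt hx hu
  exact div_nonneg (hpnn u) h.le

lemma S_le (hpnn : ∀ x, 0 ≤ p x) (hS : IntegrableOn (fun u => p u / u) (Set.Ioi 0))
    {x : ℝ} (hx : 0 ≤ x) : S p x ≤ S p 0 := by
  have hsplit : S p 0 = (∫ u in Set.Ioc 0 x, p u / u) + S p x := by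
    rw [S, S, ← setIntegral_union (Set.Ioc_disjoint_Ioi le_rfl) measurableSet_Ioi
      (hS.mono_set Set.Ioc_subset_Ioi_self) (hS.mono_set (Set.Ioi_subset_Ioi hx)),
      Set.Ioc_union_Ioi_eq_Ioi hx]
  have h1 : 0 ≤ ∫ u in Set.Ioc 0 x, p u / u := by
    refine setIntegral_nonneg measurableSet_Ioc fun u hu => ?_
    exact div_nonneg (hpnn u) hu.1.le
  linarith

/-- translation for lintegrals over Ioi -/
lemma lint_Ioi_shift (g : ℝ → ENNReal) (v : ℝ) :
    ∫⁻ x in Set.Ioi v, g x = ∫⁻ a in Set.Ioi (0:ℝ), g (a + v) := by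
  rw [← lintegral_indicator measurableSet_Ioi, ← lintegral_indicator measurableSet_Ioi,
    ← lintegral_add_right_eq_self (fun x => (Set.Ioi v).indicator g x) v]
  congr 1
  funext a
  simp [Set.indicator_apply, Set.mem_Ioi]

end Aux

/-- T preserves the mean wealth. -/
theorem T_preserves_mean (p : ℝ → ℝ) (w : ℝ) (hpm : Measurable p)
    (hpnn : ∀ x, 0 ≤ p x) (hpint : IntegrableOn p (Set.Ioi 0))
    (hp1 : ∫ x in Set.Ioi (0:ℝ), p x = 1)
    (hS : IntegrableOn (fun u => p u / u) (Set.Ioi 0))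
    (hm : IntegrableOn (fun x => x * p x) (Set.Ioi 0))
    (hw : ∫ x in Set.Ioi (0:ℝ), x * p x = w) :
    ∫ x in Set.Ioi (0:ℝ), x * T p x = w := by
  classical
  set q : ℝ → ℝ := fun u => p u / u with hq
  set qℓ : ℝ → ENNReal := fun u => ENNReal.ofReal (q u) with hqℓ
  set Sℓ : ℝ → ENNReal := fun x => ENNReal.ofReal (S p x) with hSℓ
  have hqm : Measurable q := q_meas hpm
  have hqℓm : Measurable qℓ := hqm.ennreal_ofReal
  have hSm : Measurable (S p) := S_meas hpm
  have hSℓm : Measurable Sℓ := hSm.ennreal_ofReal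
  have hwnn : 0 ≤ w := by
    rw [← hw]
    exact setIntegral_nonneg measurableSet_Ioi fun x hx => mul_nonneg (le_of_lt hx) (hpnn x)
  have hSof : ∀ x : ℝ, 0 ≤ x → Sℓ x = ∫⁻ u in Set.Ioi x, qℓ u := by
    intro x hx
    refine ofReal_integral_eq_lintegral_ofReal (hS.mono_set (Set.Ioi_subset_Ioi hx)) ?_
    refine ae_restrict_of_forall_mem measurableSet_Ioi fun u hu => ?_
    have h : 0 < u := lt_of_le_of_lt hx hu
    exact div_nonneg (hpnn u) h.le
  -- A = 1
  have hA : ∫⁻ v in Set.Ioi (0:ℝ), Sℓ v = 1 := by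
    set c : ℝ → ℝ → ENNReal := fun v u => if 0 < v ∧ v < u then qℓ u else 0 with hc
    have hcm : Measurable (Function.uncurry c) := by
      refine Measurable.ite ?_ (hqℓm.comp measurable_snd) measurable_const
      exact ((measurableSet_lt measurable_const measurable_fst).inter
        (measurableSet_lt measurable_fst measurable_snd))
    have step1 : ∫⁻ v in Set.Ioi (0:ℝ), Sℓ v = ∫⁻ v, ∫⁻ u, c v u := by
      rw [← lintegral_indicator measurableSet_Ioi]
      congr 1
      funext v
      by_cases hv : 0 < v
      · rw [Set.indicator_of_mem (Set.mem_Ioi.mpr hv), hSof v hv.le,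
          ← lintegral_indicator measurableSet_Ioi]
        congr 1; funext u; simp [hc, Set.indicator_apply, Set.mem_Ioi, hv]
      · rw [Set.indicator_of_notMem (show v ∉ Set.Ioi (0:ℝ) by simpa using hv)]
        rw [← lintegral_zero]
        congr 1; funext u; simp [hc, hv]
    have step2 : ∫⁻ v, ∫⁻ u, c v u = ∫⁻ u, ∫⁻ v, c v u :=
      lintegral_lintegral_swap hcm.aemeasurable
    have step3 : ∫⁻ u, ∫⁻ v, c v u = ∫⁻ u in Set.Ioi (0:ℝ), ENNReal.ofReal (p u) := by
      rw [← lintegral_indicator measurableSet_Ioi]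
      congr 1
      funext u
      have hin : ∀ v, c v u = (Set.Ioo (0:ℝ) u).indicator (fun _ => qℓ u) v := by
        intro v; simp [hc, Set.indicator_apply, Set.mem_Ioo]
      simp_rw [hin]
      rw [lintegral_indicator measurableSet_Ioo, setLIntegral_const, Real.volume_Ioo, sub_zero]
      by_cases hu : 0 < u
      · rw [Set.indicator_of_mem (Set.mem_Ioi.mpr hu),
          ← ENNReal.ofReal_mul (div_nonneg (hpnn u) hu.le)]
        congr 1
        field_simp [hq]
      · rw [Set.indicator_of_notMem (show u ∉ Set.Ioi (0:ℝ) by simpa using hu),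
          ENNReal.ofReal_of_nonpos (not_lt.mp hu), mul_zero]
    rw [step1, step2, step3, ← ofReal_integral_eq_lintegral_ofReal hpint
      (ae_restrict_of_forall_mem measurableSet_Ioi fun u _ => hpnn u), hp1, ENNReal.ofReal_one]
  -- B = w/2
  have hB : ∫⁻ v in Set.Ioi (0:ℝ), ENNReal.ofReal v * Sℓ v = ENNReal.ofReal (w / 2) := by
    set c : ℝ → ℝ → ENNReal := fun v u => if 0 < v ∧ v < u then ENNReal.ofReal v * qℓ u else 0
      with hc
    have hcm : Measurable (Function.uncurry c) := by
      refine Measurable.ite ?_ ((measurable_fst.ennreal_ofReal).mul (hqℓm.comp measurable_snd))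
        measurable_const
      exact ((measurableSet_lt measurable_const measurable_fst).inter
        (measurableSet_lt measurable_fst measurable_snd))
    have step1 : ∫⁻ v in Set.Ioi (0:ℝ), ENNReal.ofReal v * Sℓ v = ∫⁻ v, ∫⁻ u, c v u := by
      rw [← lintegral_indicator measurableSet_Ioi]
      congr 1
      funext v
      by_cases hv : 0 < v
      · rw [Set.indicator_of_mem (Set.mem_Ioi.mpr hv), hSof v hv.le,
          ← lintegral_const_mul' _ _ ENNReal.ofReal_ne_top, ← lintegral_indicator measurableSet_Ioi]
        congr 1; funext u; simp [hc, Set.indicator_apply, Set.mem_Ioi, hv]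
      · rw [Set.indicator_of_notMem (show v ∉ Set.Ioi (0:ℝ) by simpa using hv)]
        rw [← lintegral_zero]
        congr 1; funext u; simp [hc, hv]
    have step2 : ∫⁻ v, ∫⁻ u, c v u = ∫⁻ u, ∫⁻ v, c v u :=
      lintegral_lintegral_swap hcm.aemeasurable
    have step3 : ∫⁻ u, ∫⁻ v, c v u = ∫⁻ u in Set.Ioi (0:ℝ), ENNReal.ofReal (u * p u / 2) := by
      rw [← lintegral_indicator measurableSet_Ioi]
      congr 1
      funext u
      have hin : ∀ v, c v u = (Set.Ioo (0:ℝ) u).indicator (fun v => ENNReal.ofReal v * qℓ u) v := by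
        intro v; simp [hc, Set.indicator_apply, Set.mem_Ioo]
      simp_rw [hin]
      rw [lintegral_indicator measurableSet_Ioo,
        lintegral_mul_const' _ _ ENNReal.ofReal_ne_top]
      by_cases hu : 0 < u
      · rw [Set.indicator_of_mem (Set.mem_Ioi.mpr hu)]
        have hid : IntegrableOn (fun v : ℝ => v) (Set.Ioo 0 u) := by
          refine Measure.integrableOn_of_bounded (M := u) measure_Ioo_lt_top.ne
            measurable_id.aestronglyMeasurable ?_
          refine ae_restrict_of_forall_mem measurableSet_Ioo fun v hv => ?_
          rw [Real.norm_eq_abs, abs_of_nonneg hv.1.le]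
          exact hv.2.le
        have hval : (∫ v in Set.Ioo (0:ℝ) u, v) = u ^ 2 / 2 := by
          rw [← integral_Ioc_eq_integral_Ioo, ← intervalIntegral.integral_of_le hu.le,
            integral_id']
          ring
        rw [← ofReal_integral_eq_lintegral_ofReal hid
          (ae_restrict_of_forall_mem measurableSet_Ioo fun v hv => hv.1.le), hval]
        rw [← ENNReal.ofReal_mul (by positivity : (0:ℝ) ≤ u ^ 2 / 2)]
        congr 1
        rw [hq]
        field_simp
      · rw [Set.indicator_of_notMem (show u ∉ Set.Ioi (0:ℝ) by simpa using hu),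
          Set.Ioo_eq_empty (by simpa using hu)]
        simp
    have hmint : IntegrableOn (fun u => u * p u / 2) (Set.Ioi (0:ℝ)) := hm.div_const 2
    rw [step1, step2, step3, ← ofReal_integral_eq_lintegral_ofReal hmint
      (ae_restrict_of_forall_mem measurableSet_Ioi fun u hu => by
        have h : 0 < u := hu
        have := hpnn u
        positivity)]
    congr 1
    rw [integral_div, hw]
  -- T facts
  have hTnn : ∀ x : ℝ, 0 < x → 0 ≤ T p x := by
    intro x hx
    rw [T, intervalIntegral.integral_of_le hx.le]
    refine setIntegral_nonneg measurableSet_Ioc fun v hv => ?_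
    exact mul_nonneg (S_nonneg hpnn (by linarith [hv.2])) (S_nonneg hpnn hv.1.le)
  have hTint : ∀ x : ℝ, 0 < x →
      IntegrableOn (fun v => S p (x - v) * S p v) (Set.Ioo 0 x) := by
    intro x hx
    refine Measure.integrableOn_of_bounded (M := S p 0 * S p 0) measure_Ioo_lt_top.ne
      (((hSm.comp (measurable_id.const_sub x)).mul hSm).aestronglyMeasurable) ?_
    refine ae_restrict_of_forall_mem measurableSet_Ioo fun v hv => ?_
    have h1 : (0:ℝ) ≤ x - v := by linarith [hv.2]
    rw [Real.norm_eq_abs, abs_of_nonneg (mul_nonneg (S_nonneg hpnn h1) (S_nonneg hpnn hv.1.le))]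
    exact mul_le_mul (S_le hpnn hS h1) (S_le hpnn hS hv.1.le) (S_nonneg hpnn hv.1.le)
      (S_nonneg hpnn le_rfl)
  set cT : ℝ → ℝ → ENNReal := fun x v =>
    if 0 < v ∧ v < x then ENNReal.ofReal x * Sℓ (x - v) * Sℓ v else 0 with hcT
  have hcTm : Measurable (Function.uncurry cT) := by
    refine Measurable.ite ?_ ?_ measurable_const
    · exact ((measurableSet_lt measurable_const measurable_snd).inter
        (measurableSet_lt measurable_snd measurable_fst))
    · exact ((measurable_fst.ennreal_ofReal).mul
        (hSℓm.comp (measurable_fst.sub measurable_snd))).mul (hSℓm.comp measurable_snd)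
  have hTof : ∀ x : ℝ, 0 < x → ENNReal.ofReal (x * T p x) = ∫⁻ v, cT x v := by
    intro x hx
    have h1 : T p x = ∫ v in Set.Ioo (0:ℝ) x, S p (x - v) * S p v := by
      rw [T, intervalIntegral.integral_of_le hx.le, integral_Ioc_eq_integral_Ioo]
    rw [ENNReal.ofReal_mul hx.le, h1,
      ofReal_integral_eq_lintegral_ofReal (hTint x hx)
        (ae_restrict_of_forall_mem measurableSet_Ioo fun v hv =>
          mul_nonneg (S_nonneg hpnn (by linarith [hv.2])) (S_nonneg hpnn hv.1.le)),
      ← lintegral_const_mul' _ _ ENNReal.ofReal_ne_top, ← lintegral_indicator measurableSet_Ioo]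
    congr 1
    funext v
    by_cases hv : v ∈ Set.Ioo (0:ℝ) x
    · rw [Set.indicator_of_mem hv]
      have h2 : 0 < v ∧ v < x := ⟨hv.1, hv.2⟩
      rw [hcT]
      simp only [h2, and_self, if_true]
      rw [ENNReal.ofReal_mul (S_nonneg hpnn (by linarith [hv.2])), mul_assoc]
    · rw [Set.indicator_of_notMem hv]
      have h2 : ¬(0 < v ∧ v < x) := by simpa [Set.mem_Ioo] using hv
      simp [hcT, h2]
  -- main computation
  have hI : ∫⁻ x in Set.Ioi (0:ℝ), ENNReal.ofReal (x * T p x) = ENNReal.ofReal w := by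
    have step1 : ∫⁻ x in Set.Ioi (0:ℝ), ENNReal.ofReal (x * T p x) = ∫⁻ x, ∫⁻ v, cT x v := by
      rw [← lintegral_indicator measurableSet_Ioi]
      congr 1
      funext x
      by_cases hx : 0 < x
      · rw [Set.indicator_of_mem (Set.mem_Ioi.mpr hx), hTof x hx]
      · rw [Set.indicator_of_notMem (show x ∉ Set.Ioi (0:ℝ) by simpa using hx), ← lintegral_zero]
        congr 1; funext v
        have h2 : ¬(0 < v ∧ v < x) := fun h => hx (lt_trans h.1 h.2)
        simp [hcT, h2]
    have step2 : ∫⁻ x, ∫⁻ v, cT x v = ∫⁻ v, ∫⁻ x, cT x v :=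
      lintegral_lintegral_swap hcTm.aemeasurable
    have inner : ∀ v : ℝ, ∫⁻ x, cT x v =
        (Set.Ioi (0:ℝ)).indicator
          (fun v => ENNReal.ofReal (w / 2) * Sℓ v + ENNReal.ofReal v * Sℓ v) v := by
      intro v
      by_cases hv : 0 < v
      · have h1 : ∀ x, cT x v = (Set.Ioi v).indicator
            (fun x => ENNReal.ofReal x * Sℓ (x - v) * Sℓ v) x := by
          intro x; simp [hcT, Set.indicator_apply, Set.mem_Ioi, hv]
        simp_rw [h1]
        rw [lintegral_indicator measurableSet_Ioi, lint_Ioi_shift,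
          Set.indicator_of_mem (Set.mem_Ioi.mpr hv)]
        have h2 : ∀ a ∈ Set.Ioi (0:ℝ),
            ENNReal.ofReal (a + v) * Sℓ (a + v - v) * Sℓ v =
            ENNReal.ofReal a * Sℓ a * Sℓ v + ENNReal.ofReal v * Sℓ v * Sℓ a := by
          intro a ha
          rw [add_sub_cancel_right, ENNReal.ofReal_add (le_of_lt ha) hv.le]
          ring
        rw [setLIntegral_congr_fun measurableSet_Ioi h2,
          lintegral_add_left (f := fun a => ENNReal.ofReal a * Sℓ a * Sℓ v)
            ((ENNReal.measurable_ofReal.mul hSℓm).mul measurable_const)]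
        have e1 : ∫⁻ a in Set.Ioi (0:ℝ), ENNReal.ofReal a * Sℓ a * Sℓ v =
            ENNReal.ofReal (w / 2) * Sℓ v := by
          rw [lintegral_mul_const' _ _ ENNReal.ofReal_ne_top, hB]
        have e2 : ∫⁻ a in Set.Ioi (0:ℝ), ENNReal.ofReal v * Sℓ v * Sℓ a =
            ENNReal.ofReal v * Sℓ v := by
          rw [lintegral_const_mul' _ _
            (ENNReal.mul_ne_top ENNReal.ofReal_ne_top ENNReal.ofReal_ne_top), hA, mul_one]
        rw [e1, e2]
      · have h1 : ∀ x, cT x v = 0 := by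
          intro x
          have h2 : ¬(0 < v ∧ v < x) := fun h => hv h.1
          simp [hcT, h2]
        simp_rw [h1]
        rw [lintegral_zero, Set.indicator_of_notMem (show v ∉ Set.Ioi (0:ℝ) by simpa using hv)]
    rw [step1, step2]
    simp_rw [inner]
    rw [lintegral_indicator measurableSet_Ioi,
      lintegral_add_left (f := fun a => ENNReal.ofReal (w / 2) * Sℓ a) (hSℓm.const_mul _),
      lintegral_const_mul' _ _ ENNReal.ofReal_ne_top, hA, mul_one, hB,
      ← ENNReal.ofReal_add (by positivity) (by positivity)]
    congr 1
    ring
  -- conclude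
  have hTG : ∀ x : ℝ, 0 < x →
      x * T p x = x * ∫ v, (fun x v =>
        if 0 < v ∧ v < x then S p (x - v) * S p v else 0) x v := by
    intro x hx
    have h1 : T p x = ∫ v, (fun v => if 0 < v ∧ v < x then S p (x - v) * S p v else 0) v := by
      rw [T, intervalIntegral.integral_of_le hx.le, integral_Ioc_eq_integral_Ioo,
        ← integral_indicator measurableSet_Ioo]
      refine integral_congr_ae (Filter.Eventually.of_forall fun v => ?_)
      simp [Set.indicator_apply, Set.mem_Ioo]
    rw [h1]
  have hmeasT : AEStronglyMeasurable (fun x => x * T p x)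
      ((volume : Measure ℝ).restrict (Set.Ioi 0)) := by
    have hG : Measurable fun x => ∫ v, (fun x v =>
        if 0 < v ∧ v < x then S p (x - v) * S p v else 0) x v := by
      refine StronglyMeasurable.measurable ?_
      refine StronglyMeasurable.integral_prod_right ?_
      refine (Measurable.ite ?_ ?_ measurable_const).stronglyMeasurable
      · exact ((measurableSet_lt measurable_const measurable_snd).inter
          (measurableSet_lt measurable_snd measurable_fst))
      · exact ((hSm.comp (measurable_fst.sub measurable_snd)).mul (hSm.comp measurable_snd))
    refine ((measurable_id.mul hG).aestronglyMeasurable).congr ?_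
    refine (ae_restrict_of_forall_mem measurableSet_Ioi fun x hx => ?_)
    exact (hTG x hx).symm
  rw [integral_eq_lintegral_of_nonneg_ae
    (ae_restrict_of_forall_mem measurableSet_Ioi fun x hx =>
      mul_nonneg (le_of_lt hx) (hTnn x hx)) hmeasT, hI, ENNReal.toReal_ofReal hwnn]
end

section
/- For 1 < α < 2 and probability densities p, q on [0,∞) with equal first moments and finite α-th moments, the quantity d_α(p,q) = sup_{s>0} |L[p](s) − L[q](s)|/s^α is finite. -/
open MeasureTheory Real Set

lemma key_bound {α : ℝ} (hα1 : 1 ≤ α) (hα2 : α ≤ 2) {y : ℝ} (hy : 0 ≤ y) :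
    |Real.exp (-y) - 1 + y| ≤ y ^ α := by
  rcases eq_or_lt_of_le hy with h0 | h0
  · rw [← h0]
    simp only [neg_zero, Real.exp_zero, add_zero, sub_self, abs_zero]
    rw [Real.zero_rpow (by linarith : α ≠ 0)]
  rcases le_or_gt y 1 with h | h
  · have h1 : |Real.exp (-y) - 1 - (-y)| ≤ (-y) ^ 2 :=
      Real.abs_exp_sub_one_sub_id_le (by rwa [abs_neg, abs_of_nonneg hy])
    have h2 : y ^ (2:ℝ) ≤ y ^ α := Real.rpow_le_rpow_of_exponent_ge h0 h hα2
    calc |Real.exp (-y) - 1 + y| = |Real.exp (-y) - 1 - (-y)| := by ring_nf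
      _ ≤ (-y) ^ 2 := h1
      _ = y ^ (2:ℝ) := by
          rw [show ((2:ℝ)) = ((2:ℕ):ℝ) by norm_num, Real.rpow_natCast]; ring
      _ ≤ y ^ α := h2
  · have hnn : 0 ≤ Real.exp (-y) - 1 + y := by
      have := Real.add_one_le_exp (-y); linarith
    rw [abs_of_nonneg hnn]
    have h1 : Real.exp (-y) ≤ 1 := Real.exp_le_one_iff.mpr (by linarith)
    have h2 : y ^ (1:ℝ) ≤ y ^ α := Real.rpow_le_rpow_of_exponent_le h.le hα1
    rw [Real.rpow_one] at h2
    linarith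

lemma xp_int (p : ℝ → ℝ) (α : ℝ) (hα1 : 1 < α)
    (hpm : Measurable p) (hpnn : ∀ x, 0 ≤ p x)
    (hpint : IntegrableOn p (Set.Ioi 0))
    (hpM : IntegrableOn (fun x => x ^ α * p x) (Set.Ioi 0)) :
    IntegrableOn (fun x => x * p x) (Set.Ioi 0) := by
  apply Integrable.mono' (hpint.add hpM)
  · exact (measurable_id.mul hpm).aestronglyMeasurable
  · filter_upwards [ae_restrict_mem measurableSet_Ioi] with x hx
    have hx0 : 0 < x := hx
    have hr : 0 ≤ x ^ α * p x := mul_nonneg (Real.rpow_nonneg hx0.le α) (hpnn x)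
    rw [Real.norm_eq_abs, abs_of_nonneg (mul_nonneg hx0.le (hpnn x))]
    simp only [Pi.add_apply]
    rcases le_or_gt x 1 with h | h
    · nlinarith [hpnn x]
    · have : x ≤ x ^ α := by
        have := Real.rpow_le_rpow_of_exponent_le h.le hα1.le
        rwa [Real.rpow_one] at this
      nlinarith [hpnn x]

lemma fp_int (p : ℝ → ℝ) (α s : ℝ) (hα1 : 1 < α) (hα2 : α < 2) (hs : 0 < s)
    (hpm : Measurable p) (hpnn : ∀ x, 0 ≤ p x)
    (hpM : IntegrableOn (fun x => x ^ α * p x) (Set.Ioi 0)) :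
    IntegrableOn (fun x => (Real.exp (-s * x) - 1 + s * x) * p x) (Set.Ioi 0) := by
  apply Integrable.mono' ((hpM.const_mul (s ^ α)))
  · exact ((((Real.continuous_exp.comp (continuous_const.mul continuous_id)).sub
      continuous_const).add (continuous_const.mul continuous_id)).measurable.mul hpm).aestronglyMeasurable
  · filter_upwards [ae_restrict_mem measurableSet_Ioi] with x hx
    have hx0 : 0 < x := hx
    have hb : |Real.exp (-(s * x)) - 1 + s * x| ≤ (s * x) ^ α :=
      key_bound hα1.le hα2.le (by positivity)
    rw [Real.norm_eq_abs, abs_mul, abs_of_nonneg (hpnn x), neg_mul]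
    have heq : (s * x) ^ α = s ^ α * x ^ α := Real.mul_rpow hs.le hx0.le
    calc |Real.exp (-(s * x)) - 1 + s * x| * p x ≤ (s * x) ^ α * p x :=
          mul_le_mul_of_nonneg_right hb (hpnn x)
      _ = s ^ α * (x ^ α * p x) := by rw [heq]; ring

lemma L_eq (p : ℝ → ℝ) (α w s : ℝ) (hα1 : 1 < α) (hα2 : α < 2) (hs : 0 < s)
    (hpm : Measurable p) (hpnn : ∀ x, 0 ≤ p x)
    (hpint : IntegrableOn p (Set.Ioi 0))
    (hp1 : ∫ x in Set.Ioi (0:ℝ), p x = 1)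
    (hpw : ∫ x in Set.Ioi (0:ℝ), x * p x = w)
    (hpM : IntegrableOn (fun x => x ^ α * p x) (Set.Ioi 0)) :
    L p s = (∫ x in Set.Ioi (0:ℝ), (Real.exp (-s * x) - 1 + s * x) * p x) + 1 - s * w := by
  have hf := fp_int p α s hα1 hα2 hs hpm hpnn hpM
  have hxp := xp_int p α hα1 hpm hpnn hpint hpM
  have h1 : L p s = ∫ x in Set.Ioi (0:ℝ),
      (((Real.exp (-s * x) - 1 + s * x) * p x + p x) - s * (x * p x)) := by
    unfold L
    apply setIntegral_congr_fun measurableSet_Ioi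
    intro x _
    ring
  have hsum : Integrable (fun x => (Real.exp (-s * x) - 1 + s * x) * p x + p x)
      (volume.restrict (Set.Ioi 0)) := hf.add hpint
  have hxps : Integrable (fun x => s * (x * p x)) (volume.restrict (Set.Ioi 0)) :=
    hxp.const_mul s
  rw [h1, integral_sub hsum hxps, integral_add hf hpint, integral_const_mul, hp1, hpw]

lemma fp_bound (p : ℝ → ℝ) (α s : ℝ) (hα1 : 1 < α) (hα2 : α < 2) (hs : 0 < s)
    (hpm : Measurable p) (hpnn : ∀ x, 0 ≤ p x)
    (hpM : IntegrableOn (fun x => x ^ α * p x) (Set.Ioi 0)) :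
    |∫ x in Set.Ioi (0:ℝ), (Real.exp (-s * x) - 1 + s * x) * p x| ≤
      s ^ α * ∫ x in Set.Ioi (0:ℝ), x ^ α * p x := by
  have hf := fp_int p α s hα1 hα2 hs hpm hpnn hpM
  calc |∫ x in Set.Ioi (0:ℝ), (Real.exp (-s * x) - 1 + s * x) * p x|
      ≤ ∫ x in Set.Ioi (0:ℝ), |(Real.exp (-s * x) - 1 + s * x) * p x| :=
        by simpa only [Real.norm_eq_abs] using
          norm_integral_le_integral_norm (μ := volume.restrict (Set.Ioi 0))
            (fun x => (Real.exp (-s * x) - 1 + s * x) * p x)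
    _ ≤ ∫ x in Set.Ioi (0:ℝ), s ^ α * (x ^ α * p x) := by
        apply integral_mono_ae hf.abs (hpM.const_mul (s ^ α))
        filter_upwards [ae_restrict_mem measurableSet_Ioi] with x hx
        have hx0 : 0 < x := hx
        have hb : |Real.exp (-(s * x)) - 1 + s * x| ≤ (s * x) ^ α :=
          key_bound hα1.le hα2.le (by positivity)
        have heq : (s * x) ^ α = s ^ α * x ^ α := Real.mul_rpow hs.le hx0.le
        rw [abs_mul, abs_of_nonneg (hpnn x), neg_mul]
        calc |Real.exp (-(s * x)) - 1 + s * x| * p x ≤ (s * x) ^ α * p x :=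
              mul_le_mul_of_nonneg_right hb (hpnn x)
          _ = s ^ α * (x ^ α * p x) := by rw [heq]; ring
    _ = s ^ α * ∫ x in Set.Ioi (0:ℝ), x ^ α * p x := integral_const_mul _ _

/-- Finiteness of the metric d_α for densities with equal means and finite
α-th moments, 1 < α < 2. -/
theorem d_alpha_finite (p q : ℝ → ℝ) (α w : ℝ) (hα1 : 1 < α) (hα2 : α < 2)
    (hpm : Measurable p) (hqm : Measurable q)
    (hpnn : ∀ x, 0 ≤ p x) (hqnn : ∀ x, 0 ≤ q x)
    (hpint : IntegrableOn p (Set.Ioi 0)) (hqint : IntegrableOn q (Set.Ioi 0))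
    (hp1 : ∫ x in Set.Ioi (0:ℝ), p x = 1) (hq1 : ∫ x in Set.Ioi (0:ℝ), q x = 1)
    (hpw : ∫ x in Set.Ioi (0:ℝ), x * p x = w)
    (hqw : ∫ x in Set.Ioi (0:ℝ), x * q x = w)
    (hpM : IntegrableOn (fun x => x ^ α * p x) (Set.Ioi 0))
    (hqM : IntegrableOn (fun x => x ^ α * q x) (Set.Ioi 0)) :
    ∃ K : ℝ, ∀ s : ℝ, 0 < s → |L p s - L q s| / s ^ α ≤ K := by
  refine ⟨(∫ x in Set.Ioi (0:ℝ), x ^ α * p x) + (∫ x in Set.Ioi (0:ℝ), x ^ α * q x), ?_⟩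
  intro s hs
  have hsα : 0 < s ^ α := Real.rpow_pos_of_pos hs α
  rw [div_le_iff₀ hsα]
  have hLp := L_eq p α w s hα1 hα2 hs hpm hpnn hpint hp1 hpw hpM
  have hLq := L_eq q α w s hα1 hα2 hs hqm hqnn hqint hq1 hqw hqM
  have hdiff : L p s - L q s =
      (∫ x in Set.Ioi (0:ℝ), (Real.exp (-s * x) - 1 + s * x) * p x) -
      (∫ x in Set.Ioi (0:ℝ), (Real.exp (-s * x) - 1 + s * x) * q x) := by
    rw [hLp, hLq]; ring
  have hbp := fp_bound p α s hα1 hα2 hs hpm hpnn hpM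
  have hbq := fp_bound q α s hα1 hα2 hs hqm hqnn hqM
  rw [hdiff]
  calc |_ - _| ≤ |∫ x in Set.Ioi (0:ℝ), (Real.exp (-s * x) - 1 + s * x) * p x| +
        |∫ x in Set.Ioi (0:ℝ), (Real.exp (-s * x) - 1 + s * x) * q x| := abs_sub _ _
    _ ≤ ((∫ x in Set.Ioi (0:ℝ), x ^ α * p x) + ∫ x in Set.Ioi (0:ℝ), x ^ α * q x) * s ^ α := by
        nlinarith
end
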